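/- For every t ≥ 1 and every n ≥ 2, the number wm(n, t) of isomorphism classes of weighted games on n voters with exactly t types of voters satisfies wm(n, t) < (t·n)^(t³ + 2·t²). -/

import Mathlib

def SimpleGame (n : ℕ) (χ : Finset (Fin n) → Prop) : Prop :=
  (∀ U V : Finset (Fin n), U ⊆ V → χ U → χ V) ∧ ¬ χ (∅ : Finset (Fin n)) ∧ χ Finset.univ

def IsRep {n : ℕ} (χ : Finset (Fin n) → Prop) (q : ℕ) (w : Fin n → ℕ) : Prop :=
  ∀ U : Finset (Fin n), χ U ↔ q ≤ ∑ i ∈ U, w i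

def IsWeighted {n : ℕ} (χ : Finset (Fin n) → Prop) : Prop :=
  ∃ q w, IsRep χ q w

def MinRep {n : ℕ} (χ : Finset (Fin n) → Prop) (q : ℕ) (w : Fin n → ℕ) : Prop :=
  IsRep χ q w ∧ ∀ q' w', IsRep χ q' w' → ∀ i, w i ≤ w' i

def Desir {n : ℕ} (χ : Finset (Fin n) → Prop) (i j : Fin n) : Prop :=
  ∀ U : Finset (Fin n), j ∈ U → i ∉ U → χ U → χ (insert i (U.erase j))

def VEquiv {n : ℕ} (χ : Finset (Fin n) → Prop) (i j : Fin n) : Prop :=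
  Desir χ i j ∧ Desir χ j i

def StrictDesir {n : ℕ} (χ : Finset (Fin n) → Prop) (i j : Fin n) : Prop :=
  Desir χ i j ∧ ¬ Desir χ j i

def NullVoter {n : ℕ} (χ : Finset (Fin n) → Prop) (i : Fin n) : Prop :=
  ∀ U : Finset (Fin n), χ (insert i U) ↔ χ U

def ShiftMinWin {n : ℕ} (χ : Finset (Fin n) → Prop) (U : Finset (Fin n)) : Prop :=
  χ U ∧ (∀ i ∈ U, ¬ χ (U.erase i)) ∧
    ∀ i ∈ U, ∀ j, j ∉ U → StrictDesir χ i j → ¬ χ (insert j (U.erase i))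

def ShiftMaxLose {n : ℕ} (χ : Finset (Fin n) → Prop) (U : Finset (Fin n)) : Prop :=
  ¬ χ U ∧ (∀ j, j ∉ U → χ (insert j U)) ∧
    ∀ j ∈ U, ∀ i, i ∉ U → StrictDesir χ i j → χ (insert i (U.erase j))

def TwoTypes {n : ℕ} (χ : Finset (Fin n) → Prop) (N1 N2 : Finset (Fin n)) : Prop :=
  N1.Nonempty ∧ N2.Nonempty ∧ Disjoint N1 N2 ∧ N1 ∪ N2 = Finset.univ ∧
  (∀ i ∈ N1, ∀ j ∈ N1, VEquiv χ i j) ∧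
  (∀ i ∈ N2, ∀ j ∈ N2, VEquiv χ i j) ∧
  (∀ i ∈ N1, ∀ j ∈ N2, StrictDesir χ i j)

noncomputable def NumWinTypes2 {n : ℕ} (χ : Finset (Fin n) → Prop) (N1 N2 : Finset (Fin n)) : ℕ :=
  Set.ncard {p : ℕ × ℕ | ∃ U, ShiftMinWin χ U ∧ p = ((U ∩ N1).card, (U ∩ N2).card)}

def LPFeasible {n : ℕ} (χ : Finset (Fin n) → Prop) (N1 N2 : Finset (Fin n))
    (w1 w2 q : ℝ) : Prop :=
  0 ≤ w1 ∧ 0 ≤ w2 ∧ 0 ≤ q ∧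
  (∀ U, ShiftMinWin χ U → q ≤ ((U ∩ N1).card : ℝ) * w1 + ((U ∩ N2).card : ℝ) * w2) ∧
  (∀ U, ShiftMaxLose χ U → ((U ∩ N1).card : ℝ) * w1 + ((U ∩ N2).card : ℝ) * w2 ≤ q - 1)

def GameIso (n : ℕ) (χ χ' : Finset (Fin n) → Prop) : Prop :=
  ∃ σ : Equiv.Perm (Fin n), ∀ U : Finset (Fin n), χ' U ↔ χ (U.image σ)

noncomputable def NumTypes (n : ℕ) (χ : Finset (Fin n) → Prop) : ℕ :=
  Set.ncard {S : Set (Fin n) | ∃ i, S = {j | VEquiv χ i j}}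

noncomputable def ClassCount (n : ℕ) (χ : Finset (Fin n) → Prop) (U : Finset (Fin n)) (i : Fin n) : ℕ :=
  Set.ncard {j : Fin n | j ∈ U ∧ VEquiv χ i j}

def SameType (n : ℕ) (χ : Finset (Fin n) → Prop) (U V : Finset (Fin n)) : Prop :=
  ∀ i, ClassCount n χ U i = ClassCount n χ V i

noncomputable def NumSMWTypes (n : ℕ) (χ : Finset (Fin n) → Prop) : ℕ :=
  Set.ncard {T : Set (Finset (Fin n)) | ∃ U, ShiftMinWin χ U ∧
    T = {V | ShiftMinWin χ V ∧ SameType n χ U V}}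

noncomputable def wmntr (n t r : ℕ) : ℕ :=
  Set.ncard {C : Set (Finset (Fin n) → Prop) | ∃ χ, SimpleGame n χ ∧ IsWeighted χ ∧
    NumTypes n χ = t ∧ NumSMWTypes n χ = r ∧ C = {χ' | GameIso n χ χ'}}

noncomputable def wmnt (n t : ℕ) : ℕ :=
  Set.ncard {C : Set (Finset (Fin n) → Prop) | ∃ χ, SimpleGame n χ ∧ IsWeighted χ ∧
    NumTypes n χ = t ∧ C = {χ' | GameIso n χ χ'}}

def PreservesTypes {n : ℕ} (χ : Finset (Fin n) → Prop) (w : Fin n → ℕ) : Prop :=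
  ∀ i j, VEquiv χ i j → w i = w j

def MinRepPT {n : ℕ} (χ : Finset (Fin n) → Prop) (q : ℕ) (w : Fin n → ℕ) : Prop :=
  IsRep χ q w ∧ PreservesTypes χ w ∧
    ∀ q' w', IsRep χ q' w' → PreservesTypes χ w' → ∀ i, w i ≤ w' i

def Repre (a b k : ℕ) : Prop := ∃ u v : ℕ, u * a + v * b = k

def Wvec (t a b : ℕ) (l : Fin t → ℕ) (k : Fin t) : Fin (t + b + a) → ℕ :=
  fun i => if h : (i : ℕ) < t then
      (a * b - l ⟨(i : ℕ), h⟩ - 1) + (if (i : ℕ) = (k : ℕ) then 0 else 1)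
    else if (i : ℕ) < t + b then a else b

section Basics

variable {n : ℕ} {χ : Finset (Fin n) → Prop}

lemma desir_refl (χ : Finset (Fin n) → Prop) (i : Fin n) : Desir χ i i := by
  intro U hU hU' _; exact absurd hU hU'

lemma vequiv_refl (χ : Finset (Fin n) → Prop) (i : Fin n) : VEquiv χ i i :=
  ⟨desir_refl χ i, desir_refl χ i⟩

lemma vequiv_symm {i j : Fin n} (h : VEquiv χ i j) : VEquiv χ j i := ⟨h.2, h.1⟩

lemma desir_trans {i j k : Fin n} (hij : Desir χ i j) (hjk : Desir χ j k) :
    Desir χ i k := by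
  rcases eq_or_ne i j with rfl | hij'
  · exact hjk
  rcases eq_or_ne j k with rfl | hjk'
  · exact hij
  rcases eq_or_ne i k with rfl | hik'
  · exact desir_refl χ i
  intro U hkU hiU hχU
  by_cases hjU : j ∈ U
  · -- j ∈ U : first swap j→i, then k→j
    have h1 : χ (insert i (U.erase j)) := hij U hjU hiU hχU
    have hkV : k ∈ insert i (U.erase j) := by
      simp only [Finset.mem_insert, Finset.mem_erase]
      exact Or.inr ⟨Ne.symm hjk', hkU⟩
    have hjV : j ∉ insert i (U.erase j) := by
      simp only [Finset.mem_insert, Finset.mem_erase]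
      rintro (rfl | ⟨h, _⟩)
      exacts [hij' rfl, h rfl]
    have h2 : χ (insert j ((insert i (U.erase j)).erase k)) := hjk _ hkV hjV h1
    have : insert j ((insert i (U.erase j)).erase k) = insert i (U.erase k) := by
      ext x
      simp only [Finset.mem_insert, Finset.mem_erase]
      constructor
      · rintro (rfl | ⟨hxk, (rfl | ⟨hxj, hxU⟩)⟩)
        · exact Or.inr ⟨hjk', hjU⟩
        · exact Or.inl rfl
        · exact Or.inr ⟨hxk, hxU⟩
      · rintro (rfl | ⟨hxk, hxU⟩)
        · exact Or.inr ⟨hik', Or.inl rfl⟩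
        · rcases eq_or_ne x j with rfl | hxj
          · exact Or.inl rfl
          · exact Or.inr ⟨hxk, Or.inr ⟨hxj, hxU⟩⟩
    rwa [this] at h2
  · -- j ∉ U : first swap k→j, then j→i
    have h1 : χ (insert j (U.erase k)) := hjk U hkU hjU hχU
    have hjV : j ∈ insert j (U.erase k) := Finset.mem_insert_self _ _
    have hiV : i ∉ insert j (U.erase k) := by
      simp only [Finset.mem_insert, Finset.mem_erase]
      rintro (rfl | ⟨_, h⟩)
      exacts [hij' rfl, hiU h]
    have h2 : χ (insert i ((insert j (U.erase k)).erase j)) := hij _ hjV hiV h1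
    have : (insert j (U.erase k)).erase j = U.erase k := by
      rw [Finset.erase_insert]
      simp only [Finset.mem_erase]
      rintro ⟨_, h⟩; exact hjU h
    rwa [this] at h2

lemma vequiv_trans {i j k : Fin n} (h1 : VEquiv χ i j) (h2 : VEquiv χ j k) :
    VEquiv χ i k :=
  ⟨desir_trans h1.1 h2.1, desir_trans h2.2 h1.2⟩

/-- swap lemma : exchanging two equivalent voters preserves winning. -/
lemma vequiv_swap {i j : Fin n} (h : VEquiv χ i j) (U : Finset (Fin n))
    (hiU : i ∈ U) (hjU : j ∉ U) : χ U ↔ χ (insert j (U.erase i)) := by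
  rcases eq_or_ne i j with rfl | hij
  · rw [Finset.insert_erase hiU]
  constructor
  · exact fun hU => h.2 U hiU hjU hU
  · intro hV
    have hiV : i ∉ insert j (U.erase i) := by
      simp only [Finset.mem_insert, Finset.mem_erase]
      rintro (rfl | ⟨h', _⟩)
      exacts [hij rfl, h' rfl]
    have hjV : j ∈ insert j (U.erase i) := Finset.mem_insert_self _ _
    have := h.1 _ hjV hiV hV
    have he : insert i ((insert j (U.erase i)).erase j) = U := by
      rw [Finset.erase_insert, Finset.insert_erase hiU]
      simp only [Finset.mem_erase]
      rintro ⟨_, h'⟩; exact hjU h'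
    rwa [he] at this

end Basics
section Counts

variable {n t : ℕ} {χ : Finset (Fin n) → Prop}

/-- number of members of `U` in the fiber of `k`. -/
def ctU (f : Fin n → Fin t) (U : Finset (Fin n)) (k : Fin t) : ℕ :=
  (U.filter (fun i => f i = k)).card

lemma ctU_swap {f : Fin n → Fin t} {U : Finset (Fin n)} {i j : Fin n}
    (hiU : i ∈ U) (hjU : j ∉ U) (hfij : f i = f j) (k : Fin t) :
    ctU f (insert j (U.erase i)) k = ctU f U k := by
  unfold ctU
  rw [Finset.filter_insert, Finset.filter_erase]
  by_cases h : f j = k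
  · rw [if_pos h]
    have hjf : j ∉ (U.filter (fun x => f x = k)).erase i := by
      simp only [Finset.mem_erase, Finset.mem_filter]
      rintro ⟨-, hj, -⟩; exact hjU hj
    have hif : i ∈ U.filter (fun x => f x = k) :=
      Finset.mem_filter.2 ⟨hiU, hfij.trans h⟩
    rw [Finset.card_insert_of_notMem hjf, Finset.card_erase_of_mem hif]
    have : 0 < (U.filter (fun x => f x = k)).card := Finset.card_pos.2 ⟨i, hif⟩
    omega
  · rw [if_neg h, Finset.erase_eq_of_notMem]
    simp only [Finset.mem_filter]
    rintro ⟨-, hfi⟩; exact h (hfij ▸ hfi)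

lemma counts_iff (f : Fin n → Fin t) (hf : ∀ i j, f i = f j → VEquiv χ i j) :
    ∀ (d : ℕ) (U V : Finset (Fin n)), (U \ V).card = d →
      (∀ k, ctU f U k = ctU f V k) → (χ U ↔ χ V) := by
  intro d
  induction d using Nat.strong_induction_on with
  | _ d ih =>
    intro U V hd hc
    rcases Nat.eq_zero_or_pos d with rfl | hdpos
    · have hsub : U ⊆ V := by
        intro x hx
        by_contra hxV
        have : x ∈ U \ V := Finset.mem_sdiff.2 ⟨hx, hxV⟩
        rw [Finset.card_eq_zero.1 hd] at this
        exact absurd this (Finset.notMem_empty x)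
      have hcard : U.card = V.card := by
        rw [Finset.card_eq_sum_card_fiberwise (fun x _ => Finset.mem_univ (f x)),
            Finset.card_eq_sum_card_fiberwise (fun x _ => Finset.mem_univ (f x))]
        exact Finset.sum_congr rfl fun k _ => hc k
      rw [Finset.eq_of_subset_of_card_le hsub hcard.ge]
    · have hne : (U \ V).Nonempty := by
        rw [← Finset.card_pos, hd]; exact hdpos
      obtain ⟨i, hi⟩ := hne
      have hiU : i ∈ U := (Finset.mem_sdiff.1 hi).1
      have hiV : i ∉ V := (Finset.mem_sdiff.1 hi).2
      have hj : ∃ j, j ∈ V ∧ j ∉ U ∧ f j = f i := by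
        by_contra hnoj
        push_neg at hnoj
        have hss : V.filter (fun x => f x = f i) ⊂ U.filter (fun x => f x = f i) := by
          refine Finset.ssubset_iff_of_subset ?_ |>.2 ⟨i, ?_, ?_⟩
          · intro x hx
            rw [Finset.mem_filter] at hx ⊢
            by_cases hxU : x ∈ U
            · exact ⟨hxU, hx.2⟩
            · exact absurd hx.2 (hnoj x hx.1 hxU)
          · exact Finset.mem_filter.2 ⟨hiU, rfl⟩
          · exact fun hx => hiV (Finset.mem_filter.1 hx).1
        have h1 := Finset.card_lt_card hss
        have h2 := hc (f i)
        unfold ctU at h2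
        omega
      obtain ⟨j, hjV, hjU, hfji⟩ := hj
      set U' := insert j (U.erase i) with hU'
      have hiter : χ U ↔ χ U' :=
        vequiv_swap (hf i j hfji.symm) U hiU hjU
      have hcount : ∀ k, ctU f U' k = ctU f U k :=
        fun k => ctU_swap hiU hjU hfji.symm k
      have hdiff : U' \ V = (U \ V).erase i := by
        ext x
        simp only [hU', Finset.mem_sdiff, Finset.mem_erase, Finset.mem_insert,
          Finset.mem_erase]
        constructor
        · rintro ⟨rfl | ⟨hxi, hxU⟩, hxV⟩
          · exact absurd hjV hxV
          · exact ⟨hxi, hxU, hxV⟩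
        · rintro ⟨hxi, hxU, hxV⟩
          exact ⟨Or.inr ⟨hxi, hxU⟩, hxV⟩
      have hcard' : (U' \ V).card = d - 1 := by
        rw [hdiff, Finset.card_erase_of_mem hi, hd]
      have := ih (d - 1) (by omega) U' V hcard'
        (fun k => (hcount k).trans (hc k))
      rw [hiter, this]

end Counts

section Canonical

variable {n t : ℕ}

/-- first `c` elements of a finset of voters. -/
def firstK (A : Finset (Fin n)) (c : ℕ) : Finset (Fin n) :=
  ((A.sort (· ≤ ·)).take c).toFinset

lemma firstK_subset (A : Finset (Fin n)) (c : ℕ) : firstK A c ⊆ A := by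
  intro x hx
  rw [firstK, List.mem_toFinset] at hx
  exact (Finset.mem_sort (· ≤ ·)).1 (List.mem_of_mem_take hx)

lemma card_firstK (A : Finset (Fin n)) (c : ℕ) :
    (firstK A c).card = min c A.card := by
  rw [firstK, List.toFinset_card_of_nodup
    ((Finset.sort_nodup (r := (· ≤ ·)) (s := A)).sublist (List.take_sublist _ _))]
  rw [List.length_take, Finset.length_sort]

/-- fiber of the type map -/
def fiber (f : Fin n → Fin t) (k : Fin t) : Finset (Fin n) :=
  Finset.univ.filter (fun i => f i = k)

/-- the canonical coalition with `min (m k) (fiber k).card` voters of each type `k`. -/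
def canonU (f : Fin n → Fin t) (m : Fin t → ℕ) : Finset (Fin n) :=
  Finset.univ.biUnion (fun k => firstK (fiber f k) (m k))

lemma canonU_filter (f : Fin n → Fin t) (m : Fin t → ℕ) (k : Fin t) :
    (canonU f m).filter (fun i => f i = k) = firstK (fiber f k) (m k) := by
  ext x
  simp only [canonU, Finset.mem_filter, Finset.mem_biUnion, Finset.mem_univ, true_and]
  constructor
  · rintro ⟨⟨k', hk'⟩, hfx⟩
    have := firstK_subset _ _ hk'
    rw [fiber, Finset.mem_filter] at this
    rw [hfx] at this
    rw [this.2]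
    exact hk'
  · intro hx
    have := firstK_subset _ _ hx
    rw [fiber, Finset.mem_filter] at this
    exact ⟨⟨k, hx⟩, this.2⟩

lemma ctU_canonU (f : Fin n → Fin t) (m : Fin t → ℕ) (k : Fin t) :
    ctU f (canonU f m) k = min (m k) (fiber f k).card := by
  rw [ctU, canonU_filter, card_firstK]

end Canonical
section Iso

variable {n : ℕ}

lemma gameIso_refl (χ : Finset (Fin n) → Prop) : GameIso n χ χ := by
  refine ⟨1, fun U => ?_⟩
  simp

lemma gameIso_symm {χ χ' : Finset (Fin n) → Prop} (h : GameIso n χ χ') :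
    GameIso n χ' χ := by
  obtain ⟨σ, hσ⟩ := h
  refine ⟨σ.symm, fun U => ?_⟩
  rw [hσ (U.image (⇑σ.symm)), Finset.image_image]
  have : (⇑σ ∘ ⇑σ.symm) = id := by
    funext x; simp
  rw [this, Finset.image_id]

lemma gameIso_trans {χ₁ χ₂ χ₃ : Finset (Fin n) → Prop} (h12 : GameIso n χ₁ χ₂)
    (h23 : GameIso n χ₂ χ₃) : GameIso n χ₁ χ₃ := by
  obtain ⟨σ, hσ⟩ := h12
  obtain ⟨τ, hτ⟩ := h23
  refine ⟨σ * τ, fun U => ?_⟩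
  rw [hτ U, hσ (U.image τ), Finset.image_image]
  rfl

lemma gameIso_class_eq {χ₁ χ₂ : Finset (Fin n) → Prop} (h : GameIso n χ₁ χ₂) :
    {χ' | GameIso n χ₁ χ'} = {χ' | GameIso n χ₂ χ'} := by
  ext χ'
  exact ⟨fun h' => gameIso_trans (gameIso_symm h) h',
    fun h' => gameIso_trans h h'⟩

end Iso

section ClassMap

variable {n t : ℕ} {χ : Finset (Fin n) → Prop}

lemma exists_class_map (hNT : NumTypes n χ = t) :
    ∃ f : Fin n → Fin t, (∀ i j, VEquiv χ i j ↔ f i = f j) ∧ Function.Surjective f := by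
  classical
  set CL : Set (Set (Fin n)) := {S | ∃ i, S = {j | VEquiv χ i j}} with hCL
  have hFin : CL.Finite := Set.toFinite CL
  have hcard : hFin.toFinset.card = t := by
    rw [← Set.ncard_eq_toFinset_card CL hFin]
    exact hNT
  let e := hFin.toFinset.equivFinOfCardEq hcard
  have hmem : ∀ i : Fin n, {j | VEquiv χ i j} ∈ hFin.toFinset := fun i =>
    hFin.mem_toFinset.2 ⟨i, rfl⟩
  refine ⟨fun i => e ⟨_, hmem i⟩, fun i j => ?_, fun k => ?_⟩
  · constructor
    · intro hij
      have : ({j' | VEquiv χ i j'} : Set (Fin n)) = {j' | VEquiv χ j j'} := by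
        ext x
        exact ⟨fun hx => vequiv_trans (vequiv_symm hij) hx,
          fun hx => vequiv_trans hij hx⟩
      exact congrArg e (Subtype.ext this)
    · intro hfij
      have := e.injective hfij
      have hset : ({j' | VEquiv χ i j'} : Set (Fin n)) = {j' | VEquiv χ j j'} :=
        congrArg Subtype.val this
      have : j ∈ ({j' | VEquiv χ i j'} : Set (Fin n)) := by
        rw [hset]; exact vequiv_refl χ j
      exact this
  · have hx := (e.symm k).2
    obtain ⟨i, hi⟩ := hFin.mem_toFinset.1 hx
    refine ⟨i, ?_⟩
    have : (⟨{j | VEquiv χ i j}, hmem i⟩ : {x // x ∈ hFin.toFinset}) = e.symm k :=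
      Subtype.ext hi.symm
    show e ⟨{j | VEquiv χ i j}, hmem i⟩ = k
    rw [this, e.apply_symm_apply]

lemma sum_card_fiber (f : Fin n → Fin t) :
    ∑ k, (fiber f k).card = n := by
  classical
  have := Finset.card_eq_sum_card_fiberwise
    (f := f) (s := (Finset.univ : Finset (Fin n))) (t := Finset.univ)
    (fun x _ => Finset.mem_univ (f x))
  simpa [fiber] using this.symm

end ClassMap
section Symmetrize

variable {n t : ℕ} {χ : Finset (Fin n) → Prop}

lemma card_filter_mem_powersetCard {α : Type*} [DecidableEq α] (C : Finset α)
    (u : ℕ) (hu : 1 ≤ u) (i : α) (hi : i ∈ C) :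
    ((Finset.powersetCard u C).filter (fun V => i ∈ V)).card =
      (C.card - 1).choose (u - 1) := by
  rw [← Finset.card_erase_of_mem hi, ← Finset.card_powersetCard]
  apply Finset.card_bij (fun V _ => V.erase i)
  · intro V hV
    simp only [Finset.mem_filter, Finset.mem_powersetCard] at hV
    obtain ⟨⟨hVC, hVcard⟩, hiV⟩ := hV
    rw [Finset.mem_powersetCard]
    constructor
    · exact fun x hx => Finset.mem_erase.2
        ⟨(Finset.mem_erase.1 hx).1, hVC (Finset.mem_erase.1 hx).2⟩
    · rw [Finset.card_erase_of_mem hiV, hVcard]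
  · intro V₁ hV₁ V₂ hV₂ h
    simp only [Finset.mem_filter, Finset.mem_powersetCard] at hV₁ hV₂
    rw [← Finset.insert_erase hV₁.2, ← Finset.insert_erase hV₂.2, h]
  · intro W hW
    rw [Finset.mem_powersetCard] at hW
    refine ⟨insert i W, ?_, ?_⟩
    · simp only [Finset.mem_filter, Finset.mem_powersetCard]
      have hiW : i ∉ W := fun h => (Finset.mem_erase.1 (hW.1 h)).1 rfl
      refine ⟨⟨?_, ?_⟩, Finset.mem_insert_self _ _⟩
      · intro x hx
        rcases Finset.mem_insert.1 hx with rfl | hx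
        · exact hi
        · exact (Finset.erase_subset _ _) (hW.1 hx)
      · rw [Finset.card_insert_of_notMem hiW, hW.2]
        omega
    · rw [Finset.erase_insert (fun h => (Finset.mem_erase.1 (hW.1 h)).1 rfl)]

lemma sum_sum_powersetCard {α : Type*} [DecidableEq α] (C : Finset α) (u : ℕ)
    (hu : 1 ≤ u) (w : α → ℕ) :
    ∑ V ∈ Finset.powersetCard u C, ∑ i ∈ V, w i =
      (C.card - 1).choose (u - 1) * ∑ i ∈ C, w i := by
  have h1 : ∀ V ∈ Finset.powersetCard u C, ∑ i ∈ V, w i =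
      ∑ i ∈ C, if i ∈ V then w i else 0 := by
    intro V hV
    rw [Finset.mem_powersetCard] at hV
    rw [Finset.sum_ite_mem, Finset.inter_eq_right.2 hV.1]
  rw [Finset.sum_congr rfl h1, Finset.sum_comm, Finset.mul_sum]
  apply Finset.sum_congr rfl
  intro i hi
  rw [← Finset.sum_filter, Finset.sum_const, smul_eq_mul,
    card_filter_mem_powersetCard C u hu i hi]

/-- Averaging step over one class. -/
lemma class_step (hSG : SimpleGame n χ) (f : Fin n → Fin t)
    (hf : ∀ i j, f i = f j → VEquiv χ i j) {q : ℕ} {w : Fin n → ℕ}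
    (hrep : IsRep χ q w) (K : Fin t) (hC : (fiber f K).Nonempty) :
    IsRep χ ((fiber f K).card * q)
      (fun i => if f i = K then ∑ j ∈ fiber f K, w j else (fiber f K).card * w i) := by
  classical
  set C := fiber f K with hCdef
  set c := C.card with hc
  have hc1 : 1 ≤ c := Finset.card_pos.2 hC
  set S := ∑ j ∈ C, w j with hS
  have hq1 : 1 ≤ q := by
    by_contra h
    exact hSG.2.1 ((hrep ∅).2 (by simp; omega))
  intro U
  set u := ctU f U K with hu
  set R := ∑ i ∈ U \ C, w i with hR
  have hUC : U.filter (fun i => f i = K) = U ∩ C := by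
    ext x
    simp [hCdef, fiber, Finset.mem_inter, Finset.mem_filter]
  have hsum : ∑ i ∈ U, (if f i = K then S else c * w i) = u * S + c * R := by
    rw [← Finset.sum_filter_add_sum_filter_not U (fun i => f i = K)]
    have h1 : ∑ i ∈ U.filter (fun i => f i = K), (if f i = K then S else c * w i)
        = u * S := by
      rw [Finset.sum_congr rfl (fun i hi => if_pos (Finset.mem_filter.1 hi).2),
          Finset.sum_const, smul_eq_mul]
      rfl
    have h2 : ∑ i ∈ U.filter (fun i => ¬ f i = K), (if f i = K then S else c * w i)
        = c * R := by
      rw [Finset.sum_congr rfl (fun i hi => if_neg (Finset.mem_filter.1 hi).2),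
        ← Finset.mul_sum]
      congr 1
      apply Finset.sum_congr _ (fun _ _ => rfl)
      ext x
      simp only [Finset.mem_filter, Finset.mem_sdiff, hCdef, fiber, Finset.mem_univ,
        true_and]
    rw [h1, h2]
  rw [hsum]
  have huc : u ≤ c := by
    rw [hu, ctU, hc]
    exact Finset.card_le_card (by rw [hUC]; exact Finset.inter_subset_right)
  -- key equivalence with all u-subsets of C
  have hKey : ∀ V ∈ Finset.powersetCard u C, (χ (V ∪ (U \ C)) ↔ χ U) := by
    intro V hV
    rw [Finset.mem_powersetCard] at hV
    apply counts_iff f hf ((V ∪ (U \ C)) \ U).card _ _ rfl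
    intro k
    have hVK : ∀ x ∈ V, f x = K := by
      intro x hx
      have := hV.1 hx
      simp only [hCdef, fiber, Finset.mem_filter] at this
      exact this.2
    by_cases hk : k = K
    · rw [hk]
      rw [ctU, ctU, Finset.filter_union]
      have h1 : V.filter (fun i => f i = K) = V := Finset.filter_true_of_mem hVK
      have h2 : (U \ C).filter (fun i => f i = K) = ∅ := by
        rw [Finset.filter_eq_empty_iff]
        intro x hx
        simp only [Finset.mem_sdiff, hCdef, fiber, Finset.mem_filter,
          Finset.mem_univ, true_and] at hx
        exact hx.2
      rw [h1, h2, Finset.union_empty, hV.2]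
      exact hu
    · rw [ctU, ctU, Finset.filter_union]
      have h1 : V.filter (fun i => f i = k) = ∅ := by
        rw [Finset.filter_eq_empty_iff]
        intro x hx
        rw [hVK x hx]
        exact fun h => hk h.symm
      have h2 : (U \ C).filter (fun i => f i = k) = U.filter (fun i => f i = k) := by
        ext x
        simp only [Finset.mem_filter, Finset.mem_sdiff, hCdef, fiber,
          Finset.mem_univ, true_and]
        constructor
        · rintro ⟨⟨hxU, -⟩, hfx⟩; exact ⟨hxU, hfx⟩
        · rintro ⟨hxU, hfx⟩; exact ⟨⟨hxU, fun h => hk (h ▸ hfx ▸ rfl)⟩, hfx⟩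
      rw [h1, h2, Finset.empty_union]
  have hdisj : ∀ V ∈ Finset.powersetCard u C, Disjoint V (U \ C) := by
    intro V hV
    rw [Finset.mem_powersetCard] at hV
    exact Finset.disjoint_left.2 fun x hxV hxU =>
      (Finset.mem_sdiff.1 hxU).2 (hV.1 hxV)
  rcases Nat.eq_zero_or_pos u with hu0 | hu1
  · -- trivial case : U ∩ C = ∅
    have hUCe : U ∩ C = ∅ := by
      rw [← hUC]
      exact Finset.card_eq_zero.1 (by rw [← ctU, ← hu, hu0])
    have hsumU : ∑ i ∈ U, w i = R := by
      rw [hR]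
      congr 1
      rw [Finset.sdiff_eq_self_iff_disjoint.2 (Finset.disjoint_iff_inter_eq_empty.2 hUCe)]
    rw [hrep U, hsumU, hu0, Nat.zero_mul, Nat.zero_add]
    exact ⟨fun h => Nat.mul_le_mul_left c h, fun h => Nat.le_of_mul_le_mul_left h (by omega)⟩
  · -- main case
    set P := Finset.powersetCard u C with hP
    have hcardP : P.card = c.choose u := Finset.card_powersetCard u C
    have hchoosepos : 0 < c.choose u := Nat.choose_pos huc
    have hident : c * ((c - 1).choose (u - 1)) = c.choose u * u := by
      have h := Nat.add_one_mul_choose_eq (c - 1) (u - 1)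
      have e1 : c - 1 + 1 = c := by omega
      have e2 : u - 1 + 1 = u := by omega
      rw [e1, e2] at h
      exact h
    have hsumsum : ∑ V ∈ P, ∑ i ∈ V, w i = (c - 1).choose (u - 1) * S :=
      sum_sum_powersetCard C u hu1 w
    constructor
    · intro hχU
      have hVle : ∀ V ∈ P, q ≤ (∑ i ∈ V, w i) + R := by
        intro V hV
        have := (hrep (V ∪ (U \ C))).1 ((hKey V hV).2 hχU)
        rwa [Finset.sum_union (hdisj V hV)] at this
      have hsumle : P.card * q ≤ (∑ V ∈ P, ∑ i ∈ V, w i) + P.card * R := by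
        calc P.card * q = ∑ _V ∈ P, q := by rw [Finset.sum_const, smul_eq_mul]
        _ ≤ ∑ V ∈ P, ((∑ i ∈ V, w i) + R) := Finset.sum_le_sum hVle
        _ = (∑ V ∈ P, ∑ i ∈ V, w i) + P.card * R := by
              rw [Finset.sum_add_distrib, Finset.sum_const, smul_eq_mul]
      rw [hcardP, hsumsum] at hsumle
      have hmul : c.choose u * (c * q) ≤ c.choose u * (u * S + c * R) := by
        calc c.choose u * (c * q) = c * (c.choose u * q) := by ring
        _ ≤ c * ((c - 1).choose (u - 1) * S + c.choose u * R) :=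
              Nat.mul_le_mul_left c hsumle
        _ = (c * ((c - 1).choose (u - 1))) * S + c * (c.choose u * R) := by ring
        _ = (c.choose u * u) * S + c * (c.choose u * R) := by rw [hident]
        _ = c.choose u * (u * S + c * R) := by ring
      exact Nat.le_of_mul_le_mul_left hmul hchoosepos
    · intro hle
      by_contra hχU
      have hVlt : ∀ V ∈ P, (∑ i ∈ V, w i) + R + 1 ≤ q := by
        intro V hV
        have hnot : ¬ χ (V ∪ (U \ C)) := fun h => hχU ((hKey V hV).1 h)
        have := (hrep (V ∪ (U \ C))).not.1 hnot
        rw [Finset.sum_union (hdisj V hV)] at this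
        omega
      have hsumle : (∑ V ∈ P, ∑ i ∈ V, w i) + P.card * R + P.card ≤ P.card * q := by
        calc (∑ V ∈ P, ∑ i ∈ V, w i) + P.card * R + P.card
            = ∑ V ∈ P, ((∑ i ∈ V, w i) + R + 1) := by
              rw [Finset.sum_add_distrib, Finset.sum_add_distrib, Finset.sum_const,
                Finset.sum_const, smul_eq_mul, smul_eq_mul, Nat.mul_one]
        _ ≤ ∑ _V ∈ P, q := Finset.sum_le_sum hVlt
        _ = P.card * q := by rw [Finset.sum_const, smul_eq_mul]
      rw [hcardP, hsumsum] at hsumle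
      have hmul : c.choose u * (u * S + c * R + c) ≤ c.choose u * (c * q) := by
        calc c.choose u * (u * S + c * R + c)
            = (c.choose u * u) * S + c * (c.choose u * R) + c * c.choose u := by ring
        _ = (c * ((c - 1).choose (u - 1))) * S + c * (c.choose u * R) + c * c.choose u := by
              rw [hident]
        _ = c * ((c - 1).choose (u - 1) * S + c.choose u * R + c.choose u) := by ring
        _ ≤ c * (c.choose u * q) := Nat.mul_le_mul_left c hsumle
        _ = c.choose u * (c * q) := by ring
      have := Nat.le_of_mul_le_mul_left hmul hchoosepos
      omega

end Symmetrize
section PTRep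

variable {n t : ℕ} {χ : Finset (Fin n) → Prop}

lemma exists_pt_rep (hSG : SimpleGame n χ) (hW : IsWeighted χ) (f : Fin n → Fin t)
    (hf : ∀ i j, f i = f j → VEquiv χ i j) :
    ∃ q w, IsRep χ q w ∧ ∀ i j, f i = f j → w i = w j := by
  classical
  have key : ∀ k : ℕ, ∃ q w, IsRep χ q w ∧
      ∀ (j : Fin t), (j : ℕ) < k → ∀ i₁ i₂, f i₁ = j → f i₂ = j → w i₁ = w i₂ := by
    intro k
    induction k with
    | zero =>
      obtain ⟨q, w, h⟩ := hW
      exact ⟨q, w, h, fun j hj => absurd hj (Nat.not_lt_zero _)⟩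
    | succ k ih =>
      obtain ⟨q, w, hrep, hconst⟩ := ih
      by_cases hkt : k < t
      · set K : Fin t := ⟨k, hkt⟩ with hK
        rcases (fiber f K).eq_empty_or_nonempty with hemp | hne
        · refine ⟨q, w, hrep, ?_⟩
          intro j hj i₁ i₂ h1 h2
          rcases Nat.lt_or_ge (j : ℕ) k with h | h
          · exact hconst j h i₁ i₂ h1 h2
          · have hjK : j = K := by
              apply Fin.ext
              simp only [hK]
              omega
            have hmem : i₁ ∈ fiber f K := by
              simp only [fiber, Finset.mem_filter, Finset.mem_univ, true_and]
              rw [h1, hjK]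
            rw [hemp] at hmem
            exact absurd hmem (Finset.notMem_empty _)
        · refine ⟨(fiber f K).card * q, _, class_step hSG f hf hrep K hne, ?_⟩
          intro j hj i₁ i₂ h1 h2
          by_cases hjK : j = K
          · rw [hjK] at h1 h2
            simp only [h1, h2, if_pos]
          · have hjk : (j : ℕ) < k := by
              have : (j : ℕ) ≠ k := fun h => hjK (Fin.ext (by simp [hK, h]))
              omega
            have hn1 : ¬ (f i₁ = K) := by rw [h1]; exact hjK
            have hn2 : ¬ (f i₂ = K) := by rw [h2]; exact hjK
            simp only [if_neg hn1, if_neg hn2]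
            rw [hconst j hjk i₁ i₂ h1 h2]
      · exact ⟨q, w, hrep, fun j _ => hconst j (lt_of_lt_of_le j.isLt (by omega))⟩
  obtain ⟨q, w, hrep, hconst⟩ := key t
  exact ⟨q, w, hrep, fun i j hij => hconst (f j) (f j).isLt i j hij rfl⟩

end PTRep
section RawCode

variable {n t : ℕ}

/-- a map labelling voters by their types. -/
def IsClassMap (χ : Finset (Fin n) → Prop) (f : Fin n → Fin t) : Prop :=
  (∀ i j, VEquiv χ i j ↔ f i = f j) ∧ Function.Surjective f

lemma fiber_card_le (f : Fin n → Fin t) (k : Fin t) : (fiber f k).card ≤ n := by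
  calc (fiber f k).card ≤ (Finset.univ : Finset (Fin n)).card := Finset.card_le_univ _
  _ = n := by simp

/-- the code of a game relative to a type map: type sizes plus the finite set of
winning count-vectors. -/
noncomputable def rawOf (χ : Finset (Fin n) → Prop) (f : Fin n → Fin t) :
    (Fin t → Fin (n + 1)) × Finset (Fin t → Fin (n + 1)) :=
  letI := Classical.propDecidable
  (fun k => ⟨(fiber f k).card, Nat.lt_succ_of_le (fiber_card_le f k)⟩,
   Finset.univ.filter (fun m => (∀ k, (m k : ℕ) ≤ (fiber f k).card) ∧
     χ (canonU f (fun k => (m k : ℕ)))))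

lemma mem_rawOf_snd {χ : Finset (Fin n) → Prop} {f : Fin n → Fin t}
    {m : Fin t → Fin (n + 1)} :
    m ∈ (rawOf χ f).2 ↔ ((∀ k, (m k : ℕ) ≤ (fiber f k).card) ∧
      χ (canonU f (fun k => (m k : ℕ)))) := by
  classical
  simp [rawOf]

lemma ctU_le_fiber (f : Fin n → Fin t) (U : Finset (Fin n)) (k : Fin t) :
    ctU f U k ≤ (fiber f k).card :=
  Finset.card_le_card (Finset.filter_subset_filter _ (Finset.subset_univ U))

lemma chi_canonU {χ : Finset (Fin n) → Prop} (f : Fin n → Fin t)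
    (hf : ∀ i j, f i = f j → VEquiv χ i j) (U : Finset (Fin n)) :
    χ U ↔ χ (canonU f (fun k => ctU f U k)) := by
  apply counts_iff f hf (U \ canonU f (fun k => ctU f U k)).card _ _ rfl
  intro k
  rw [ctU_canonU, min_eq_left (ctU_le_fiber f U k)]

/-- completeness : equal codes force isomorphic games. -/
lemma rawOf_complete {χ₁ χ₂ : Finset (Fin n) → Prop} {f₁ f₂ : Fin n → Fin t}
    (h₁ : IsClassMap χ₁ f₁) (h₂ : IsClassMap χ₂ f₂)
    (heq : rawOf χ₁ f₁ = rawOf χ₂ f₂) : GameIso n χ₁ χ₂ := by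
  classical
  have hsize : ∀ k, (fiber f₁ k).card = (fiber f₂ k).card := by
    intro k
    have := congrFun (congrArg Prod.fst heq) k
    exact congrArg Fin.val this
  -- build the permutation matching fibers
  have hcards : ∀ k : Fin t, Fintype.card {a // f₂ a = k} = Fintype.card {b // f₁ b = k} := by
    intro k
    rw [Fintype.card_subtype, Fintype.card_subtype]
    exact (hsize k).symm
  have e : ∀ k : Fin t, {a // f₂ a = k} ≃ {b // f₁ b = k} :=
    fun k => Fintype.equivOfCardEq (hcards k)
  set σfun := Equiv.ofFiberEquiv e with hσ
  have hmap : ∀ a, f₁ (σfun a) = f₂ a := fun a => Equiv.ofFiberEquiv_map e a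
  refine ⟨σfun, fun U => ?_⟩
  -- counts of U with respect to f₂
  have hbd : ∀ k, ctU f₂ U k ≤ n := fun k => (ctU_le_fiber f₂ U k).trans (fiber_card_le f₂ k)
  set m : Fin t → Fin (n + 1) := fun k => ⟨ctU f₂ U k, Nat.lt_succ_of_le (hbd k)⟩ with hm
  have hmval : ∀ k, (m k : ℕ) = ctU f₂ U k := fun k => rfl
  have himgct : ∀ k, ctU f₁ (U.image σfun) k = ctU f₂ U k := by
    intro k
    unfold ctU
    rw [← Finset.card_image_of_injective (U.filter (fun i => f₂ i = k)) σfun.injective]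
    congr 1
    ext x
    simp only [Finset.mem_filter, Finset.mem_image]
    constructor
    · rintro ⟨⟨a, haU, rfl⟩, hfx⟩
      exact ⟨a, ⟨haU, by rw [← hmap a]; exact hfx⟩, rfl⟩
    · rintro ⟨a, ⟨haU, hfa⟩, rfl⟩
      exact ⟨⟨a, haU, rfl⟩, by rw [hmap a]; exact hfa⟩
  have step2 : χ₂ U ↔ m ∈ (rawOf χ₂ f₂).2 := by
    rw [mem_rawOf_snd]
    constructor
    · intro hU
      refine ⟨fun k => ctU_le_fiber f₂ U k, ?_⟩
      exact (chi_canonU f₂ (fun i j h => (h₂.1 i j).2 h) U).1 hU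
    · rintro ⟨-, hc⟩
      exact (chi_canonU f₂ (fun i j h => (h₂.1 i j).2 h) U).2 hc
  have step1 : χ₁ (U.image σfun) ↔ m ∈ (rawOf χ₁ f₁).2 := by
    rw [mem_rawOf_snd]
    constructor
    · intro hU
      refine ⟨fun k => ?_, ?_⟩
      · show (m k : ℕ) ≤ (fiber f₁ k).card
        rw [hsize k]
        exact ctU_le_fiber f₂ U k
      · have := (chi_canonU f₁ (fun i j h => (h₁.1 i j).2 h) (U.image σfun)).1 hU
        have hceq : (fun k => ctU f₁ (U.image σfun) k) = (fun k => (m k : ℕ)) := by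
          funext k
          rw [himgct k, hmval k]
        rwa [hceq] at this
    · rintro ⟨-, hc⟩
      apply (chi_canonU f₁ (fun i j h => (h₁.1 i j).2 h) (U.image σfun)).2
      have hceq : (fun k => ctU f₁ (U.image σfun) k) = (fun k => (m k : ℕ)) := by
        funext k
        rw [himgct k, hmval k]
      rwa [hceq]
  rw [step2, step1, heq]

/-- realizability of codes by halfspaces over the reals. -/
def HSet {t n : ℕ} (s : Fin t → Fin (n + 1)) (W : Finset (Fin t → Fin (n + 1))) : Prop :=
  ∃ (a : Fin t → ℝ) (q : ℝ), ∀ m, m ∈ W ↔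
    ((∀ k, (m k : ℕ) ≤ (s k : ℕ)) ∧ q ≤ ∑ k, a k * ((m k : ℕ) : ℝ))

lemma rawOf_hset {χ : Finset (Fin n) → Prop} (hSG : SimpleGame n χ)
    (hW : IsWeighted χ) {f : Fin n → Fin t} (hcm : IsClassMap χ f) :
    HSet (rawOf χ f).1 (rawOf χ f).2 := by
  classical
  obtain ⟨q, w, hrep, hconst⟩ :=
    exists_pt_rep hSG hW f (fun i j h => (hcm.1 i j).2 h)
  set g := Function.surjInv hcm.2 with hg
  have hfg : ∀ k, f (g k) = k := fun k => Function.surjInv_eq hcm.2 k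
  refine ⟨fun k => (w (g k) : ℝ), (q : ℝ), fun m => ?_⟩
  rw [mem_rawOf_snd]
  have hsum : (∀ k, (m k : ℕ) ≤ (fiber f k).card) →
      (∑ i ∈ canonU f (fun k => (m k : ℕ)), w i) = ∑ k, (m k : ℕ) * w (g k) := by
    intro hbd
    rw [← Finset.sum_fiberwise_of_maps_to (fun x _ => Finset.mem_univ (f x)) w]
    apply Finset.sum_congr rfl
    intro k _
    have hcardk : (Finset.filter (fun i => f i = k) (canonU f (fun k => (m k : ℕ)))).card
        = (m k : ℕ) := by
      have := ctU_canonU f (fun k => (m k : ℕ)) k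
      rw [ctU] at this
      rw [this, min_eq_left (hbd k)]
    calc ∑ i ∈ Finset.filter (fun i => f i = k) (canonU f (fun k => (m k : ℕ))), w i
        = ∑ _i ∈ Finset.filter (fun i => f i = k) (canonU f (fun k => (m k : ℕ))),
          w (g k) := by
          apply Finset.sum_congr rfl
          intro i hi
          exact hconst i (g k) (by rw [(Finset.mem_filter.1 hi).2, hfg])
    _ = (m k : ℕ) * w (g k) := by rw [Finset.sum_const, smul_eq_mul, hcardk]
  have hcast : ((∑ k, (m k : ℕ) * w (g k) : ℕ) : ℝ)
      = ∑ k, ((w (g k) : ℝ)) * ((m k : ℕ) : ℝ) := by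
    push_cast
    exact Finset.sum_congr rfl (fun k _ => mul_comm _ _)
  constructor
  · rintro ⟨hbd, hχ⟩
    refine ⟨hbd, ?_⟩
    have h1 := (hrep _).1 hχ
    rw [hsum hbd] at h1
    rw [← hcast]
    exact_mod_cast h1
  · rintro ⟨hbd, hle⟩
    have hbd' : ∀ k, (m k : ℕ) ≤ (fiber f k).card := hbd
    refine ⟨hbd', ?_⟩
    apply (hrep _).2
    rw [hsum hbd']
    rw [← hcast] at hle
    exact_mod_cast hle

end RawCode
section VC

variable {n t : ℕ}

/-- the family of possible winning-vector sets for a given size vector. -/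
noncomputable def hsetFamily (t n : ℕ) (s : Fin t → Fin (n + 1)) :
    Finset (Finset (Fin t → Fin (n + 1))) :=
  letI := Classical.propDecidable
  Finset.univ.filter (fun W => HSet s W)

lemma mem_hsetFamily {s : Fin t → Fin (n + 1)} {W : Finset (Fin t → Fin (n + 1))} :
    W ∈ hsetFamily t n s ↔ HSet s W := by
  classical
  simp [hsetFamily]

lemma hset_shatter_card (s : Fin t → Fin (n + 1)) {P : Finset (Fin t → Fin (n + 1))}
    (hP : (hsetFamily t n s).Shatters P) : P.card ≤ t + 1 := by
  classical
  by_contra hlt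
  push_neg at hlt
  obtain ⟨W₀, hW₀mem, hPW₀⟩ := hP.exists_superset
  obtain ⟨a₀, q₀, h₀⟩ := mem_hsetFamily.1 hW₀mem
  have hbound : ∀ m ∈ P, ∀ k, (m k : ℕ) ≤ (s k : ℕ) := fun m hm => ((h₀ m).1 (hPW₀ hm)).1
  set p : ↥P → (Fin t → ℝ) := fun x k => ((x.1 k : ℕ) : ℝ) with hp
  have hdep : ¬ AffineIndependent ℝ p := by
    intro hind
    have hcard := hind.card_le_finrank_succ
    have hle : Module.finrank ℝ (vectorSpan ℝ (Set.range p)) ≤ t := by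
      have h1 : Module.finrank ℝ (vectorSpan ℝ (Set.range p))
          ≤ Module.finrank ℝ (Fin t → ℝ) := Submodule.finrank_le _
      rwa [Module.finrank_fintype_fun_eq_card, Fintype.card_fin] at h1
    rw [Fintype.card_coe] at hcard
    omega
  obtain ⟨I, x, hx⟩ := Convex.radon_partition hdep
  set A : Finset (Fin t → Fin (n + 1)) :=
    (P.attach.filter (fun y => y ∈ I)).image Subtype.val with hA
  have hAP : A ⊆ P := by
    intro z hz
    rw [hA] at hz
    obtain ⟨y, _, rfl⟩ := Finset.mem_image.1 hz
    exact y.2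
  obtain ⟨WA, hWAmem, hWA⟩ := hP hAP
  obtain ⟨aA, qA, hA'⟩ := mem_hsetFamily.1 hWAmem
  have hlin : IsLinearMap ℝ (fun y : Fin t → ℝ => ∑ k, aA k * y k) := by
    constructor
    · intro y z
      rw [← Finset.sum_add_distrib]
      exact Finset.sum_congr rfl fun k _ => by simp [Pi.add_apply, mul_add]
    · intro c y
      rw [Finset.smul_sum]
      exact Finset.sum_congr rfl fun k _ => by
        simp [Pi.smul_apply, smul_eq_mul]
        ring
  have hmemA : ∀ (m : Fin t → Fin (n + 1)) (hmP : m ∈ P),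
      m ∈ A ↔ (⟨m, hmP⟩ : ↥P) ∈ I := by
    intro m hmP
    rw [hA]
    simp only [Finset.mem_image, Finset.mem_filter, Finset.mem_attach, true_and]
    constructor
    · rintro ⟨y, hy, rfl⟩
      convert hy
    · intro hm
      exact ⟨⟨m, hmP⟩, hm, rfl⟩
  have hIsub : p '' I ⊆ {y : Fin t → ℝ | qA ≤ ∑ k, aA k * y k} := by
    rintro - ⟨⟨m, hmP⟩, hmI, rfl⟩
    have hmA : m ∈ A := (hmemA m hmP).2 hmI
    have hmWA : m ∈ WA := (Finset.mem_inter.1 (hWA ▸ hmA)).2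
    exact ((hA' m).1 hmWA).2
  have hIcsub : p '' Iᶜ ⊆ {y : Fin t → ℝ | (∑ k, aA k * y k) < qA} := by
    rintro - ⟨⟨m, hmP⟩, hmIc, rfl⟩
    have hmA : m ∉ A := fun h => hmIc ((hmemA m hmP).1 h)
    have hmWA : m ∉ WA := fun h => hmA (hWA ▸ Finset.mem_inter.2 ⟨hmP, h⟩)
    have : ¬ (qA ≤ ∑ k, aA k * ((m k : ℕ) : ℝ)) := fun hq =>
      hmWA ((hA' m).2 ⟨hbound m hmP, hq⟩)
    exact not_le.1 this
  have h1 : qA ≤ ∑ k, aA k * x k :=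
    convexHull_min hIsub (convex_halfSpace_ge hlin qA) hx.1
  have h2 : (∑ k, aA k * x k) < qA :=
    convexHull_min hIcsub (convex_halfSpace_lt hlin qA) hx.2
  exact absurd h1 (not_le.2 h2)

lemma card_hsetFamily_le (s : Fin t → Fin (n + 1)) :
    (hsetFamily t n s).card ≤ ∑ k ∈ Finset.Iic (t + 1), ((n + 1) ^ t).choose k := by
  classical
  have hvc : (hsetFamily t n s).vcDim ≤ t + 1 := by
    apply Finset.sup_le
    intro P hP
    exact hset_shatter_card s (Finset.mem_shatterer.1 hP)
  calc (hsetFamily t n s).card ≤ (hsetFamily t n s).shatterer.card :=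
        Finset.card_le_card_shatterer _
  _ ≤ ∑ k ∈ Finset.Iic ((hsetFamily t n s).vcDim),
        (Fintype.card (Fin t → Fin (n + 1))).choose k :=
        Finset.card_shatterer_le_sum_vcDim
  _ ≤ ∑ k ∈ Finset.Iic (t + 1), (Fintype.card (Fin t → Fin (n + 1))).choose k :=
        Finset.sum_le_sum_of_subset (Finset.Iic_subset_Iic.2 hvc)
  _ = ∑ k ∈ Finset.Iic (t + 1), ((n + 1) ^ t).choose k := by
        rw [Fintype.card_fun, Fintype.card_fin, Fintype.card_fin]

end VC
section Assembly

variable {n t : ℕ}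

noncomputable def codeOf (n t : ℕ) (χ : Finset (Fin n) → Prop) :
    (Fin t → Fin (n + 1)) × Finset (Fin t → Fin (n + 1)) :=
  letI := Classical.propDecidable
  if h : ∃ f : Fin n → Fin t, IsClassMap χ f then rawOf χ (Classical.choose h)
  else (fun _ => 0, ∅)

noncomputable def gameCode (n t : ℕ) (C : Set (Finset (Fin n) → Prop)) :
    (Fin t → Fin (n + 1)) × Finset (Fin t → Fin (n + 1)) :=
  letI := Classical.propDecidable
  if h : ∃ χ, SimpleGame n χ ∧ IsWeighted χ ∧ NumTypes n χ = t ∧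
      C = {χ' | GameIso n χ χ'}
  then codeOf n t (Classical.choose h) else (fun _ => 0, ∅)

lemma codeOf_eq {χ : Finset (Fin n) → Prop} (h : ∃ f : Fin n → Fin t, IsClassMap χ f) :
    ∃ f, IsClassMap χ f ∧ codeOf n t χ = rawOf χ f := by
  refine ⟨Classical.choose h, Classical.choose_spec h, ?_⟩
  unfold codeOf
  rw [dif_pos h]

lemma gameCode_spec {C : Set (Finset (Fin n) → Prop)}
    (h : ∃ χ, SimpleGame n χ ∧ IsWeighted χ ∧ NumTypes n χ = t ∧
      C = {χ' | GameIso n χ χ'}) :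
    ∃ χ f, SimpleGame n χ ∧ IsWeighted χ ∧ C = {χ' | GameIso n χ χ'} ∧
      IsClassMap χ f ∧ gameCode n t C = rawOf χ f := by
  obtain ⟨hSG, hW, hNT, hC⟩ := Classical.choose_spec h
  obtain ⟨f, hf1, hf2⟩ := exists_class_map hNT
  obtain ⟨f', hcm', heq'⟩ := codeOf_eq (χ := Classical.choose h) ⟨f, hf1, hf2⟩
  refine ⟨Classical.choose h, f', hSG, hW, hC, hcm', ?_⟩
  unfold gameCode
  rw [dif_pos h]
  exact heq'

lemma rawOf_fst_sum {χ : Finset (Fin n) → Prop} (f : Fin n → Fin t) :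
    ∑ k, ((rawOf χ f).1 k : ℕ) = n := by
  show ∑ k, (fiber f k).card = n
  exact sum_card_fiber f

noncomputable def goodCodes (n t : ℕ) :
    Finset ((Fin t → Fin (n + 1)) × Finset (Fin t → Fin (n + 1))) :=
  letI := Classical.propDecidable
  Finset.univ.filter (fun p => HSet p.1 p.2 ∧ ∑ k, (p.1 k : ℕ) = n)

lemma mem_goodCodes {p : (Fin t → Fin (n + 1)) × Finset (Fin t → Fin (n + 1))} :
    p ∈ goodCodes n t ↔ (HSet p.1 p.2 ∧ ∑ k, (p.1 k : ℕ) = n) := by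
  classical
  simp [goodCodes]

/-- main counting bound. -/
lemma wmnt_le_card (n t : ℕ) :
    wmnt n t ≤ (goodCodes n t).card := by
  classical
  set S : Set (Set (Finset (Fin n) → Prop)) :=
    {C | ∃ χ, SimpleGame n χ ∧ IsWeighted χ ∧ NumTypes n χ = t ∧
      C = {χ' | GameIso n χ χ'}} with hS
  set Gd := goodCodes n t with hGd
  have hinj : Set.InjOn (gameCode n t) S := by
    intro C₁ h₁ C₂ h₂ heq
    obtain ⟨χ₁, f₁, hSG₁, hW₁, hC₁, hcm₁, he₁⟩ := gameCode_spec h₁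
    obtain ⟨χ₂, f₂, hSG₂, hW₂, hC₂, hcm₂, he₂⟩ := gameCode_spec h₂
    rw [he₁, he₂] at heq
    have hiso : GameIso n χ₁ χ₂ := rawOf_complete hcm₁ hcm₂ heq
    rw [hC₁, hC₂]
    exact gameIso_class_eq hiso
  have himg : gameCode n t '' S ⊆ ↑Gd := by
    rintro - ⟨C, hC, rfl⟩
    obtain ⟨χ, f, hSG, hW, hCe, hcm, he⟩ := gameCode_spec hC
    rw [he]
    rw [Finset.mem_coe, hGd, mem_goodCodes]
    exact ⟨rawOf_hset hSG hW hcm, rawOf_fst_sum f⟩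
  have h1 : wmnt n t = S.ncard := rfl
  rw [h1, ← Set.ncard_image_of_injOn hinj]
  have := Set.ncard_le_ncard himg (Finset.finite_toSet Gd)
  rwa [Set.ncard_coe_finset] at this

noncomputable def sizesSet (n t : ℕ) : Finset (Fin t → Fin (n + 1)) :=
  letI := Classical.propDecidable
  Finset.univ.filter (fun s => ∑ k, (s k : ℕ) = n)

lemma mem_sizesSet {s : Fin t → Fin (n + 1)} :
    s ∈ sizesSet n t ↔ ∑ k, (s k : ℕ) = n := by
  classical
  simp [sizesSet]

lemma card_sizes_le (n t' : ℕ) :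
    (sizesSet n (t' + 1)).card ≤ (n + 1) ^ t' := by
  classical
  have : ((Finset.univ : Finset (Fin t' → Fin (n + 1)))).card = (n + 1) ^ t' := by
    rw [Finset.card_univ, Fintype.card_fun, Fintype.card_fin, Fintype.card_fin]
  rw [← this]
  apply Finset.card_le_card_of_injOn (fun s => Fin.init s) (fun _ _ => Finset.mem_univ _)
  intro s₁ hs₁ s₂ hs₂ hinit
  rw [Finset.mem_coe, mem_sizesSet] at hs₁ hs₂
  have hsum₁ := hs₁
  have hsum₂ := hs₂
  rw [Fin.sum_univ_castSucc] at hsum₁ hsum₂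
  have hcast : ∀ i : Fin t', s₁ i.castSucc = s₂ i.castSucc := by
    intro i
    exact congrFun hinit i
  have hsum_eq : ∑ i : Fin t', (s₁ i.castSucc : ℕ) = ∑ i : Fin t', (s₂ i.castSucc : ℕ) :=
    Finset.sum_congr rfl (fun i _ => by rw [hcast i])
  have hlast : s₁ (Fin.last t') = s₂ (Fin.last t') := by
    apply Fin.ext
    omega
  funext k
  refine Fin.lastCases ?_ ?_ k
  · exact hlast
  · exact hcast

end Assembly
section Final

lemma card_goodCodes_le (n t : ℕ) :
    (goodCodes n t).card ≤
      (sizesSet n t).card * ∑ k ∈ Finset.Iic (t + 1), ((n + 1) ^ t).choose k := by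
  classical
  have hmap : ∀ p ∈ goodCodes n t, p.1 ∈ sizesSet n t := fun p hp =>
    mem_sizesSet.2 (mem_goodCodes.1 hp).2
  rw [Finset.card_eq_sum_card_fiberwise hmap]
  have hfib : ∀ s ∈ sizesSet n t,
      ((goodCodes n t).filter (fun p => p.1 = s)).card ≤
        ∑ k ∈ Finset.Iic (t + 1), ((n + 1) ^ t).choose k := by
    intro s _
    have h1 : ((goodCodes n t).filter (fun p => p.1 = s)).card ≤ (hsetFamily t n s).card := by
      apply Finset.card_le_card_of_injOn (fun p => p.2)
      · intro p hp
        rw [Finset.mem_coe, Finset.mem_filter] at hp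
        have := (mem_goodCodes.1 hp.1).1
        rw [hp.2] at this
        exact mem_hsetFamily.2 this
      · intro p₁ hp₁ p₂ hp₂ h2
        rw [Finset.mem_coe, Finset.mem_filter] at hp₁ hp₂
        exact Prod.ext (hp₁.2.trans hp₂.2.symm) h2
    exact h1.trans (card_hsetFamily_le s)
  calc ∑ s ∈ sizesSet n t, ((goodCodes n t).filter (fun p => p.1 = s)).card
      ≤ ∑ _s ∈ sizesSet n t, ∑ k ∈ Finset.Iic (t + 1), ((n + 1) ^ t).choose k :=
        Finset.sum_le_sum hfib
  _ = (sizesSet n t).card * ∑ k ∈ Finset.Iic (t + 1), ((n + 1) ^ t).choose k := by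
        rw [Finset.sum_const, smul_eq_mul]

end Final

theorem stmt18 (n t : ℕ) (ht : 1 ≤ t) (hn : 2 ≤ n) :
    wmnt n t < (t * n) ^ (t ^ 3 + 2 * t ^ 2) := by
  obtain ⟨t', rfl⟩ : ∃ t', t = t' + 1 := ⟨t - 1, by omega⟩
  have h1 : wmnt n (t' + 1) ≤ (sizesSet n (t' + 1)).card *
      ∑ k ∈ Finset.Iic (t' + 2), ((n + 1) ^ (t' + 1)).choose k :=
    le_trans (wmnt_le_card n (t' + 1)) (card_goodCodes_le n (t' + 1))
  have hsz : (sizesSet n (t' + 1)).card ≤ (n + 1) ^ t' := card_sizes_le n t'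
  rcases Nat.eq_zero_or_pos t' with rfl | ht'
  · -- t = 1
    have hB : ∑ k ∈ Finset.Iic 2, ((n + 1) ^ 1).choose k
        = 1 + (n + 1) + (n + 1).choose 2 := by
      have h2 : (Finset.Iic 2 : Finset ℕ) = {0, 1, 2} := by decide
      rw [pow_one, h2]
      rw [Finset.sum_insert (by decide), Finset.sum_insert (by decide),
        Finset.sum_singleton]
      rw [Nat.choose_zero_right, Nat.choose_one_right]
      ring
    have hwm : wmnt n 1 ≤ 1 + (n + 1) + (n + 1).choose 2 := by
      have := h1.trans (Nat.mul_le_mul_right _ hsz)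
      rwa [pow_zero, one_mul, hB] at this
    have hC2 : 2 * ((n + 1).choose 2) = n * (n + 1) := by
      rw [Nat.choose_two_right]
      simp only [Nat.add_sub_cancel]
      rw [mul_comm (n + 1) n]
      exact Nat.mul_div_cancel' (even_iff_two_dvd.1 (Nat.even_mul_succ_self n))
    have e1 : 2 * n ≤ n ^ 2 := by nlinarith
    have e2 : 2 * n ^ 2 ≤ n ^ 3 := by nlinarith
    have hnn : n * (n + 1) = n ^ 2 + n := by ring
    have hfin : 1 + (n + 1) + (n + 1).choose 2 < n ^ 3 := by
      have h2B : 2 * (1 + (n + 1) + (n + 1).choose 2) = n ^ 2 + 3 * n + 4 := by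
        rw [Nat.mul_add, hC2, hnn]
        ring
      linarith
    have hR : (1 * n) ^ (1 ^ 3 + 2 * 1 ^ 2) = n ^ 3 := by norm_num
    rw [hR]
    exact lt_of_le_of_lt hwm hfin
  · -- t ≥ 2
    set T := t' + 1 with hT
    have hT2 : 2 ≤ T := by omega
    have hbase : n + 1 ≤ T * n := by nlinarith
    have hB2 : T + 2 ≤ T * n := by nlinarith
    have hN1 : 1 ≤ (n + 1) ^ T := Nat.one_le_pow _ _ (by omega)
    have hBle : ∑ k ∈ Finset.Iic (T + 1), ((n + 1) ^ T).choose k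
        ≤ (T + 2) * ((n + 1) ^ T) ^ (T + 1) := by
      have := Finset.sum_le_card_nsmul (Finset.Iic (T + 1))
        (fun k => ((n + 1) ^ T).choose k) (((n + 1) ^ T) ^ (T + 1)) ?_
      · rwa [Nat.card_Iic, smul_eq_mul] at this
      · intro k hk
        rw [Finset.mem_Iic] at hk
        exact (Nat.choose_le_pow _ k).trans (Nat.pow_le_pow_right (by omega) hk)
    have hchain : wmnt n T ≤ (T * n) ^ (t' + (T * (T + 1) + 1)) := by
      calc wmnt n T ≤ (sizesSet n T).card *
          ∑ k ∈ Finset.Iic (T + 1), ((n + 1) ^ T).choose k := h1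
      _ ≤ (n + 1) ^ t' * ((T + 2) * ((n + 1) ^ T) ^ (T + 1)) :=
          Nat.mul_le_mul hsz hBle
      _ = (n + 1) ^ (t' + T * (T + 1)) * (T + 2) := by
          rw [← pow_mul, pow_add]
          ring
      _ ≤ (T * n) ^ (t' + T * (T + 1)) * (T * n) := by
          exact Nat.mul_le_mul (Nat.pow_le_pow_left hbase _) hB2
      _ = (T * n) ^ (t' + (T * (T + 1) + 1)) := by
          rw [← pow_succ]
          ring_nf
    have hexp : t' + (T * (T + 1) + 1) < T ^ 3 + 2 * T ^ 2 := by
      have : T = t' + 1 := hT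
      nlinarith
    have h4 : 1 < T * n := by nlinarith
    exact lt_of_le_of_lt hchain (Nat.pow_lt_pow_right h4 hexp)
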